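/- arXiv:0804.1663 — 2 statements merged into one kernel-verified Lean document; each statement's English description precedes it below -/
import Mathlib

section
/- Let q_j = −i(1 − e^{−i p_j Δ})/Δ for real p_j and Δ > 0, j = 1, 2, 3, and let ρ² = (Im q₂q̄₃)² + (Im q₃q̄₁)² + (Im q₁q̄₂)². Then ρ² ≤ (1/2)·(∑_{j=1}^{3} (2 − 2cos p_j Δ)/Δ²)², i.e. ρ ≤ |q|²/√2 where |q|² = ∑_j (2 − 2cos p_jΔ)/Δ². -/
set_option maxHeartbeats 1000000

theorem stmt8 (Δ : ℝ) (hΔ : 0 < Δ) (p₁ p₂ p₃ : ℝ)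
    (q : ℝ → ℂ)
    (hq : ∀ p : ℝ, q p = -Complex.I * (1 - Complex.exp (-Complex.I * (p : ℂ) * (Δ : ℂ))) / (Δ : ℂ)) :
    ((q p₂ * starRingEnd ℂ (q p₃)).im) ^ 2 + ((q p₃ * starRingEnd ℂ (q p₁)).im) ^ 2 +
        ((q p₁ * starRingEnd ℂ (q p₂)).im) ^ 2
      ≤ (1 / 2) *
          ((2 - 2 * Real.cos (p₁ * Δ)) / Δ ^ 2 + (2 - 2 * Real.cos (p₂ * Δ)) / Δ ^ 2 +
              (2 - 2 * Real.cos (p₃ * Δ)) / Δ ^ 2) ^ 2 := by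
  have hΔ0 : (Δ : ℝ) ≠ 0 := ne_of_gt hΔ
  have hkey : ∀ p : ℝ, q p = ⟨Real.sin (p * Δ) / Δ, (Real.cos (p * Δ) - 1) / Δ⟩ := by
    intro p
    rw [hq p]
    have h1 : -Complex.I * (p : ℂ) * (Δ : ℂ) = ((-(p * Δ) : ℝ) : ℂ) * Complex.I := by
      push_cast; ring
    have hΔc : (Δ : ℂ) ≠ 0 := by exact_mod_cast hΔ0
    rw [h1, Complex.exp_mul_I, ← Complex.ofReal_cos, ← Complex.ofReal_sin,
      Real.cos_neg, Real.sin_neg, Complex.mk_eq_add_mul_I]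
    push_cast
    field_simp
    ring_nf
    simp [Complex.ext_iff]
  simp only [hkey, Complex.mul_im, Complex.conj_re, Complex.conj_im]
  set s1 := Real.sin (p₁ * Δ); set s2 := Real.sin (p₂ * Δ); set s3 := Real.sin (p₃ * Δ)
  set c1 := Real.cos (p₁ * Δ); set c2 := Real.cos (p₂ * Δ); set c3 := Real.cos (p₃ * Δ)
  have h1 : s1 ^ 2 + c1 ^ 2 = 1 := Real.sin_sq_add_cos_sq _
  have h2 : s2 ^ 2 + c2 ^ 2 = 1 := Real.sin_sq_add_cos_sq _
  have h3 : s3 ^ 2 + c3 ^ 2 = 1 := Real.sin_sq_add_cos_sq _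
  have hΔ4 : (0:ℝ) < (Δ ^ 2) ^ 2 := by positivity
  have L : (s2/Δ * -((c3-1)/Δ) + (c2-1)/Δ * (s3/Δ)) ^ 2
      + (s3/Δ * -((c1-1)/Δ) + (c3-1)/Δ * (s1/Δ)) ^ 2
      + (s1/Δ * -((c2-1)/Δ) + (c1-1)/Δ * (s2/Δ)) ^ 2
      = ((-s2*(c3-1) + (c2-1)*s3)^2 + (-s3*(c1-1) + (c3-1)*s1)^2
        + (-s1*(c2-1) + (c1-1)*s2)^2) / (Δ^2)^2 := by
    field_simp
  have R : (1:ℝ)/2 * ((2 - 2*c1 + (2 - 2*c2) + (2 - 2*c3)) ^ 2 / (Δ^2)^2)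
      = (1/2 * (2 - 2*c1 + (2 - 2*c2) + (2 - 2*c3)) ^ 2) / (Δ^2)^2 := by ring
  rw [← add_div, ← add_div, div_pow, L, R, div_le_div_iff_of_pos_right hΔ4]
  nlinarith [sq_nonneg (s1*s2 + (1-c1)*(1-c2)), sq_nonneg (s2*s3 + (1-c2)*(1-c3)),
    sq_nonneg (s3*s1 + (1-c3)*(1-c1)), sq_nonneg (1-c1), sq_nonneg (1-c2), sq_nonneg (1-c3)]
end

section
/- Let W = {z ∈ ℂ⁴ : −Im z⁰ > |Im 𝐳| + k} for some k > 0, let F be holomorphic on W and polynomially bounded there, and let f ∈ 𝒯(T(ℝ⁴)) (a continuous function on every tube ℝ⁴ + iK, K compact convex, holomorphic in the interior, with all polynomial-weighted sup norms finite). Then for any ε, ε' > 0 the two integrals ∫_{ℝ⁴} F(x⁰ − i(k+ε), 𝐱)·f(x⁰ − i(k+ε), 𝐱) dx and ∫_{ℝ⁴} F(x⁰ − i(k+ε'), 𝐱)·f(x⁰ − i(k+ε'), 𝐱) dx are equal. -/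
open MeasureTheory

/-- The tube `T(K) = ℝ⁴ + iK` over a base `K ⊆ ℝ⁴`. -/
def tubeSet (K : Set (Fin 4 → ℝ)) : Set (Fin 4 → ℂ) :=
  {z | (fun j => (z j).im) ∈ K}

/-- Membership in the test function space `𝒯(T(ℝ⁴))`: continuous on every tube over a
compact convex base, holomorphic in its interior, with all polynomial-weighted sup
norms finite. -/
def MemTestSpace (f : (Fin 4 → ℂ) → ℂ) : Prop :=
  ∀ K : Set (Fin 4 → ℝ), IsCompact K → Convex ℝ K →
    ContinuousOn f (tubeSet K) ∧
    DifferentiableOn ℂ f (interior (tubeSet K)) ∧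
    ∀ p : Fin 4 → ℕ, ∃ C : ℝ, ∀ z ∈ tubeSet K,
      ‖(∏ j, z j ^ p j) * f z‖ ≤ C

/-- The domain `W = {z ∈ ℂ⁴ : −Im z⁰ > |Im 𝐳| + k}`. -/
def Wset (k : ℝ) : Set (Fin 4 → ℂ) :=
  {z | Real.sqrt (∑ j : Fin 3, ((z j.succ).im) ^ 2) + k < -(z 0).im}

/-- `F ∈ 𝒜₀(W)`: for all `ε, K > 0` it is polynomially bounded on the `ε`-shrunken
region of `W` intersected with `{|Im z_j| ≤ K}`. -/
def PolyBoundedOn (F : (Fin 4 → ℂ) → ℂ) (W : Set (Fin 4 → ℂ)) : Prop :=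
  ∀ ε > (0 : ℝ), ∀ K > (0 : ℝ), ∃ (p : Fin 4 → ℕ) (C : ℝ), 0 ≤ C ∧
    ∀ z : Fin 4 → ℂ, (∀ w ∉ W, ε ≤ dist z w) → (∀ j, |(z j).im| ≤ K) →
      ‖F z‖ ≤ C * (1 + ‖∏ j, z j ^ p j‖)

/-! ### Auxiliary definitions and lemmas -/

section Aux

/-- The slice embedding `w ↦ (w, y)` of `ℂ` into `ℂ⁴` with real spatial part `y`. -/
def slice4 (y : Fin 3 → ℝ) (w : ℂ) : Fin 4 → ℂ := Fin.cons w fun i => (y i : ℂ)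

lemma slice4_zero (y : Fin 3 → ℝ) (w : ℂ) : slice4 y w 0 = w := rfl
lemma slice4_succ (y : Fin 3 → ℝ) (w : ℂ) (i : Fin 3) : slice4 y w i.succ = (y i : ℂ) :=
  Fin.cons_succ _ _ _

def boxlo (k M : ℝ) : Fin 4 → ℝ := fun j => if j = 0 then -(k+M+1) else -1
def boxhi (k : ℝ) : Fin 4 → ℝ := fun j => if j = 0 then -k else 1
def Kbox (k M : ℝ) : Set (Fin 4 → ℝ) := Set.pi Set.univ fun j => Set.Icc (boxlo k M j) (boxhi k j)

lemma Kbox_compact (k M : ℝ) : IsCompact (Kbox k M) :=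
  isCompact_univ_pi fun _ => isCompact_Icc

lemma Kbox_convex (k M : ℝ) : Convex ℝ (Kbox k M) :=
  convex_pi fun _ _ => convex_Icc _ _

lemma Wopen (k : ℝ) : IsOpen (Wset k) := by
  apply isOpen_lt
  · apply Continuous.add _ continuous_const
    apply Real.continuous_sqrt.comp
    exact continuous_finset_sum _ fun j _ =>
      ((Complex.continuous_im.comp (continuous_apply j.succ)).pow 2)
  · exact (Complex.continuous_im.comp (continuous_apply 0)).neg

lemma slice4_mem_W {k : ℝ} {w : ℂ} (h : w.im < -k) (y : Fin 3 → ℝ) :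
    slice4 y w ∈ Wset k := by
  have h3 : ∀ i : Fin 3, ((slice4 y w i.succ).im) ^ 2 = 0 := by
    intro i; rw [slice4_succ]; simp
  simp only [Wset, Set.mem_setOf_eq, Finset.sum_congr rfl fun i _ => h3 i]
  simp [slice4_zero]
  linarith

lemma slice4_mem_tube {k M : ℝ} {w : ℂ}
    (h : w.im ∈ Set.Icc (-(k+M+1)) (-k)) (y : Fin 3 → ℝ) :
    slice4 y w ∈ tubeSet (Kbox k M) := by
  intro j _
  rcases j.eq_zero_or_eq_succ with rfl | ⟨i, rfl⟩
  · simpa [boxlo, boxhi, slice4_zero] using h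
  · simp [boxlo, boxhi, slice4_succ, Fin.succ_ne_zero]

lemma opentube_open (k M : ℝ) :
    IsOpen (tubeSet (Set.pi Set.univ fun j => Set.Ioo (boxlo k M j) (boxhi k j))) := by
  have h : tubeSet (Set.pi Set.univ fun j => Set.Ioo (boxlo k M j) (boxhi k j)) =
      (fun z : Fin 4 → ℂ => fun j => (z j).im) ⁻¹'
        (Set.pi Set.univ fun j => Set.Ioo (boxlo k M j) (boxhi k j)) := rfl
  rw [h]
  exact (isOpen_set_pi Set.finite_univ fun j _ => isOpen_Ioo).preimage
    (continuous_pi fun j => Complex.continuous_im.comp (continuous_apply j))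

lemma opentube_sub (k M : ℝ) :
    tubeSet (Set.pi Set.univ fun j => Set.Ioo (boxlo k M j) (boxhi k j)) ⊆
      interior (tubeSet (Kbox k M)) := by
  apply interior_maximal _ (opentube_open k M)
  intro z hz j hj
  exact Set.Ioo_subset_Icc_self (hz j hj)

lemma slice4_mem_opentube {k M : ℝ} {w : ℂ}
    (h : w.im ∈ Set.Ioo (-(k+M+1)) (-k)) (y : Fin 3 → ℝ) :
    slice4 y w ∈ tubeSet (Set.pi Set.univ fun j => Set.Ioo (boxlo k M j) (boxhi k j)) := by
  intro j _
  rcases j.eq_zero_or_eq_succ with rfl | ⟨i, rfl⟩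
  · simpa [boxlo, boxhi, slice4_zero] using h
  · simp [boxlo, boxhi, slice4_succ, Fin.succ_ne_zero]

lemma slice4_far {k m M : ℝ} (hm : 0 < m) {w : ℂ}
    (hw : w.im ∈ Set.Icc (-(k+M)) (-(k+m))) (y : Fin 3 → ℝ) :
    ∀ v ∉ Wset k, m / 8 ≤ dist (slice4 y w) v := by
  intro v hv
  by_contra hlt
  push_neg at hlt
  apply hv
  have hj : ∀ j : Fin 4, |(slice4 y w j).im - (v j).im| < m / 8 := by
    intro j
    calc |(slice4 y w j).im - (v j).im| = |((slice4 y w j) - v j).im| := by simp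
      _ ≤ ‖(slice4 y w j) - v j‖ := Complex.abs_im_le_norm _
      _ = dist (slice4 y w j) (v j) := (Complex.dist_eq _ _).symm
      _ ≤ dist (slice4 y w) v := dist_le_pi_dist _ _ j
      _ < m / 8 := hlt
  have hsucc : ∀ i : Fin 3, ((v i.succ).im) ^ 2 ≤ (m / 8) ^ 2 := by
    intro i
    have h1 := hj i.succ
    rw [slice4_succ] at h1
    simp only [Complex.ofReal_im, zero_sub, abs_neg] at h1
    nlinarith [abs_nonneg ((v i.succ).im), le_abs_self ((v i.succ).im),
      neg_abs_le ((v i.succ).im)]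
  have hsum : ∑ i : Fin 3, ((v i.succ).im) ^ 2 ≤ (3 * (m / 8)) ^ 2 := by
    have h2 := Finset.sum_le_sum (fun i (_ : i ∈ Finset.univ) => hsucc i)
    simp only [Finset.sum_const, Finset.card_univ, Fintype.card_fin, nsmul_eq_mul] at h2
    nlinarith [sq_nonneg (m/8)]
  have hsqrt : Real.sqrt (∑ i : Fin 3, ((v i.succ).im) ^ 2) ≤ 3 * (m / 8) := by
    rw [show (3 * (m/8)) = Real.sqrt ((3 * (m/8))^2) by
      rw [Real.sqrt_sq (by linarith)]]
    exact Real.sqrt_le_sqrt hsum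
  have h0 : (v 0).im < -(k + m) + m / 8 := by
    have h3 := hj 0
    rw [slice4_zero] at h3
    have h4 := abs_lt.mp h3
    have hw2 := hw.2
    linarith [h4.1, h4.2]
  show Real.sqrt (∑ i : Fin 3, ((v i.succ).im) ^ 2) + k < -(v 0).im
  linarith

lemma aux_pow (a : ℝ) (ha : 0 ≤ a) (p : ℕ) :
    (1 + a ^ p) * (1 + a ^ 2) ≤ 2 * (1 + a ^ (p + 2)) := by
  have hpq : a ^ (p + 2) = a ^ p * a ^ 2 := pow_add a p 2
  rcases le_total a 1 with h | h
  · have h1 : a ^ p ≤ 1 := pow_le_one₀ ha h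
    have h2 : a ^ 2 ≤ 1 := pow_le_one₀ ha h
    have h3 : 0 ≤ a ^ p := pow_nonneg ha p
    have h4 : 0 ≤ a ^ 2 := pow_nonneg ha 2
    nlinarith
  · have h1 : 1 ≤ a ^ p := one_le_pow₀ h
    have h2 : 1 ≤ a ^ 2 := one_le_pow₀ h
    nlinarith

lemma contour_shift (g : ℂ → ℂ) (c₁ c₂ : ℝ) (U : Set ℂ)
    (hsub : ∀ w : ℂ, w.im ∈ Set.uIcc (-c₁) (-c₂) → w ∈ U)
    (hg : DifferentiableOn ℂ g U) (B : ℝ)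
    (hB : ∀ w : ℂ, w.im ∈ Set.uIcc (-c₁) (-c₂) → ‖g w‖ ≤ B * (1 + w.re ^ 2)⁻¹) :
    ∫ x : ℝ, g (x - (c₁ : ℂ) * Complex.I) = ∫ x : ℝ, g (x - (c₂ : ℂ) * Complex.I) := by
  have hgc : ContinuousOn g U := hg.continuousOn
  have him : ∀ (x c : ℝ), ((x : ℂ) - (c : ℂ) * Complex.I).im = -c := by intro x c; simp
  have hre : ∀ (x c : ℝ), ((x : ℂ) - (c : ℂ) * Complex.I).re = x := by intro x c; simp
  have hline : ∀ c : ℝ, -c ∈ Set.uIcc (-c₁) (-c₂) →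
      Continuous (fun x : ℝ => g (x - (c : ℂ) * Complex.I)) := by
    intro c hc
    have hφ : Continuous (fun x : ℝ => (x : ℂ) - (c : ℂ) * Complex.I) := by continuity
    refine hgc.comp_continuous hφ fun x => hsub _ ?_
    rw [him]; exact hc
  have hint : ∀ c : ℝ, -c ∈ Set.uIcc (-c₁) (-c₂) →
      Integrable (fun x : ℝ => g (x - (c : ℂ) * Complex.I)) := by
    intro c hc
    refine Integrable.mono' ((integrable_inv_one_add_sq).const_mul B)
      ((hline c hc).aestronglyMeasurable) (Filter.Eventually.of_forall fun x => ?_)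
    have h := hB ((x : ℂ) - (c : ℂ) * Complex.I) (by rw [him]; exact hc)
    rw [hre] at h; exact h
  have h1 : -c₁ ∈ Set.uIcc (-c₁) (-c₂) := Set.left_mem_uIcc
  have h2 : -c₂ ∈ Set.uIcc (-c₁) (-c₂) := Set.right_mem_uIcc
  have rect : ∀ T : ℝ,
      (∫ x : ℝ in -T..T, g (x - (c₁ : ℂ) * Complex.I)) =
      (∫ x : ℝ in -T..T, g (x - (c₂ : ℂ) * Complex.I))
        - Complex.I • (∫ y : ℝ in -c₁..-c₂, g (T + y * Complex.I))
        + Complex.I • (∫ y : ℝ in -c₁..-c₂, g (-T + y * Complex.I)) := by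
    intro T
    have H := Complex.integral_boundary_rect_eq_zero_of_differentiableOn g
      (((-T : ℝ) : ℂ) + ((-c₁ : ℝ) : ℂ) * Complex.I)
      (((T : ℝ) : ℂ) + ((-c₂ : ℝ) : ℂ) * Complex.I)
      (by
        refine hg.mono fun w hw => ?_
        rw [Complex.mem_reProdIm] at hw
        refine hsub w ?_
        simpa using hw.2)
    simp only [Complex.add_re, Complex.add_im, Complex.sub_re, Complex.sub_im,
      Complex.neg_re, Complex.neg_im,
      Complex.ofReal_re, Complex.ofReal_im, Complex.mul_re, Complex.mul_im,
      Complex.I_re, Complex.I_im, Complex.ofReal_neg, mul_zero, mul_one, zero_mul,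
      zero_add, add_zero, neg_zero, sub_zero, zero_sub, neg_neg, neg_mul,
      ← sub_eq_add_neg] at H
    rw [sub_eq_zero] at H
    linear_combination H
  have vert : ∀ s : ℝ → ℝ, (∀ T, (s T) ^ 2 = T ^ 2) →
      Filter.Tendsto (fun T : ℝ => Complex.I • (∫ y : ℝ in -c₁..-c₂, g (s T + y * Complex.I)))
        Filter.atTop (nhds 0) := by
    intro s hs
    rw [tendsto_zero_iff_norm_tendsto_zero]
    have hbd : ∀ T : ℝ,
        ‖Complex.I • (∫ y : ℝ in -c₁..-c₂, g (s T + y * Complex.I))‖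
          ≤ B * (1 + T ^ 2)⁻¹ * |(-c₂) - (-c₁)| := by
      intro T
      rw [norm_smul, Complex.norm_I, one_mul]
      refine intervalIntegral.norm_integral_le_of_norm_le_const fun y hy => ?_
      have hy' : (((s T : ℝ) : ℂ) + (y : ℂ) * Complex.I).im ∈ Set.uIcc (-c₁) (-c₂) := by
        simpa using Set.uIoc_subset_uIcc hy
      have h := hB _ hy'
      have hre2 : (((s T : ℝ) : ℂ) + (y : ℂ) * Complex.I).re = s T := by simp
      rw [hre2] at h
      rwa [hs T] at h
    refine squeeze_zero (fun T => norm_nonneg _) hbd ?_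
    have h0 : Filter.Tendsto (fun T : ℝ => (1 + T ^ 2)⁻¹) Filter.atTop (nhds 0) := by
      apply Filter.Tendsto.comp tendsto_inv_atTop_zero
      exact Filter.tendsto_atTop_add_const_left _ 1 (Filter.tendsto_pow_atTop (by norm_num))
    have h5 := (h0.const_mul B).mul_const |(-c₂) - (-c₁)|
    simpa using h5
  have lim1 : Filter.Tendsto (fun T : ℝ => ∫ x : ℝ in -T..T, g (x - (c₁ : ℂ) * Complex.I))
      Filter.atTop (nhds (∫ x : ℝ, g (x - (c₁ : ℂ) * Complex.I))) :=
    intervalIntegral_tendsto_integral (hint c₁ h1) Filter.tendsto_neg_atTop_atBot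
      Filter.tendsto_id
  have lim2 : Filter.Tendsto (fun T : ℝ => ∫ x : ℝ in -T..T, g (x - (c₂ : ℂ) * Complex.I))
      Filter.atTop (nhds (∫ x : ℝ, g (x - (c₂ : ℂ) * Complex.I))) :=
    intervalIntegral_tendsto_integral (hint c₂ h2) Filter.tendsto_neg_atTop_atBot
      Filter.tendsto_id
  have limrhs : Filter.Tendsto (fun T : ℝ => ∫ x : ℝ in -T..T, g (x - (c₁ : ℂ) * Complex.I))
      Filter.atTop (nhds (∫ x : ℝ, g (x - (c₂ : ℂ) * Complex.I))) := by
    have v1 := vert (fun T => T) (fun T => rfl)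
    have v2 := vert (fun T => -T) (fun T => by ring)
    have h6 := (lim2.sub v1).add v2
    simp only [sub_zero, add_zero] at h6
    refine h6.congr fun T => ?_
    simp only [Complex.ofReal_neg]
    exact (rect T).symm
  exact tendsto_nhds_unique lim1 limrhs

lemma marg (h : (Fin 4 → ℝ) → ℂ) (hi : Integrable h) :
    ∫ x, h x = ∫ y : Fin 3 → ℝ, ∫ a : ℝ, h (Fin.cons a y) := by
  set e := MeasurableEquiv.piFinSuccAbove (fun _ : Fin 4 => ℝ) 0 with he
  have e_mp : MeasurePreserving e.symm :=
    (volume_preserving_piFinSuccAbove (fun _ : Fin 4 => ℝ) 0).symm e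
  have hsymm : ∀ p : ℝ × (Fin 3 → ℝ), e.symm p = Fin.cons p.1 p.2 := by
    intro p
    simp [he, MeasurableEquiv.piFinSuccAbove_symm_apply, Fin.insertNthEquiv,
      Fin.insertNth_zero']
  have hint : Integrable (fun p : ℝ × (Fin 3 → ℝ) => h (e.symm p)) :=
    (e_mp.integrable_comp_emb e.symm.measurableEmbedding).mpr hi
  have key : ∫ x, h x = ∫ p : ℝ × (Fin 3 → ℝ), h (e.symm p) :=
    (e_mp.integral_comp e.symm.measurableEmbedding h).symm
  have step : (∫ p : ℝ × (Fin 3 → ℝ), h (e.symm p))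
      = ∫ a : ℝ, ∫ y : Fin 3 → ℝ, h (e.symm (a, y)) := integral_prod _ hint
  have swap : (∫ a : ℝ, ∫ y : Fin 3 → ℝ, h (e.symm (a, y)))
      = ∫ y : Fin 3 → ℝ, ∫ a : ℝ, h (e.symm (a, y)) := integral_integral_swap hint
  rw [key, step, swap]
  simp_rw [hsymm]

lemma master {k m M : ℝ} {Kb : Set (Fin 4 → ℝ)} (F f : (Fin 4 → ℂ) → ℂ)
    (p : Fin 4 → ℕ) (C : ℝ) (hC : 0 ≤ C)
    (hFbd : ∀ (w : ℂ), w.im ∈ Set.Icc (-(k+M)) (-(k+m)) → ∀ y : Fin 3 → ℝ,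
      ‖F (slice4 y w)‖ ≤
        C * (1 + ‖∏ j, (slice4 y w j) ^ p j‖))
    (fb : ∀ p' : Fin 4 → ℕ, ∃ C' : ℝ, ∀ z ∈ tubeSet Kb,
      ‖(∏ j, z j ^ p' j) * f z‖ ≤ C')
    (htube : ∀ (w : ℂ), w.im ∈ Set.Icc (-(k+M)) (-(k+m)) → ∀ y : Fin 3 → ℝ,
      slice4 y w ∈ tubeSet Kb) :
    ∃ B : ℝ, 0 ≤ B ∧ ∀ (w : ℂ), w.im ∈ Set.Icc (-(k+M)) (-(k+m)) → ∀ y : Fin 3 → ℝ,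
      ‖F (slice4 y w) * f (slice4 y w)‖ ≤
        B * (1 + w.re ^ 2)⁻¹ * (∏ i, (1 + (y i) ^ 2)⁻¹) := by
  classical
  set q : Fin 4 → ℕ := fun j => p j + 2 with hq
  set Cc : (Fin 4 → ℕ) → ℝ := fun p' => (fb p').choose with hCcdef
  have hCc : ∀ p' : Fin 4 → ℕ, ∀ z ∈ tubeSet Kb,
      ‖(∏ j, z j ^ p' j) * f z‖ ≤ Cc p' := fun p' => (fb p').choose_spec
  set D0 : ℝ := ∑ s ∈ (Finset.univ : Finset (Fin 4)).powerset,
      max (Cc fun j => if j ∈ s then q j else 0) 0 with hD0def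
  have hD0 : 0 ≤ D0 := Finset.sum_nonneg fun s _ => le_max_right _ _
  refine ⟨2 * C * 16 * (16 * D0), by positivity, ?_⟩
  intro w hw y
  set z := slice4 y w with hz
  set a : Fin 4 → ℝ := fun j => ‖z j‖ with ha
  have ha0 : ∀ j, 0 ≤ a j := fun j => norm_nonneg _
  have hztube : z ∈ tubeSet Kb := htube w hw y
  -- decay of f
  set s : Finset (Fin 4) := Finset.univ.filter (fun j => 1 ≤ a j) with hs
  set e : Fin 4 → ℕ := fun j => if j ∈ s then q j else 0 with he
  have hfac : ∀ j, 1 + (a j) ^ (q j) ≤ 2 * (a j) ^ (e j) := by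
    intro j
    by_cases hj : j ∈ s
    · have h1 : 1 ≤ a j := (Finset.mem_filter.mp hj).2
      have : 1 ≤ (a j) ^ (q j) := one_le_pow₀ h1
      simp only [he, if_pos hj]
      linarith
    · have h1 : a j ≤ 1 := by
        have := Finset.mem_filter.not.mp hj
        push_neg at this
        exact le_of_lt (this (Finset.mem_univ j))
      have : (a j) ^ (q j) ≤ 1 := pow_le_one₀ (ha0 j) h1
      simp only [he, if_neg hj, pow_zero]
      linarith
  have hprod_e : (∏ j, (a j) ^ (e j)) * ‖f z‖ ≤ D0 := by
    have h1 : (∏ j, (a j) ^ (e j)) * ‖f z‖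
        = ‖(∏ j, z j ^ e j) * f z‖ := by
      rw [norm_mul, norm_prod]
      simp only [norm_pow]; rfl
    rw [h1]
    refine (hCc e z hztube).trans ?_
    have hse : Cc e ≤ max (Cc fun j => if j ∈ s then q j else 0) 0 := le_max_left _ _
    refine hse.trans ?_
    exact Finset.single_le_sum (f := fun t => max (Cc fun j => if j ∈ t then q j else 0) 0)
      (fun t _ => le_max_right _ _) (Finset.mem_powerset.mpr (Finset.subset_univ s))
  have hfdecay : (∏ j, (1 + (a j) ^ (q j))) * ‖f z‖ ≤ 16 * D0 := by
    have h1 : (∏ j, (1 + (a j) ^ (q j))) ≤ ∏ j, 2 * (a j) ^ (e j) :=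
      Finset.prod_le_prod (fun j _ => by positivity) (fun j _ => hfac j)
    have h2 : (∏ j, 2 * (a j) ^ (e j)) = 16 * ∏ j, (a j) ^ (e j) := by
      rw [Finset.prod_mul_distrib, Finset.prod_const]
      norm_num
    calc (∏ j, (1 + (a j) ^ (q j))) * ‖f z‖
        ≤ (∏ j, 2 * (a j) ^ (e j)) * ‖f z‖ := by
          exact mul_le_mul_of_nonneg_right h1 (norm_nonneg _)
      _ = 16 * ((∏ j, (a j) ^ (e j)) * ‖f z‖) := by rw [h2]; ring
      _ ≤ 16 * D0 := by linarith [hprod_e]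
  -- F bound
  have hFz : ‖F z‖ ≤ C * (1 + ‖∏ j, z j ^ p j‖) := hFbd w hw y
  have habs : ‖∏ j, z j ^ p j‖ = ∏ j, (a j) ^ (p j) := by
    rw [norm_prod]; simp only [norm_pow]; rfl
  have h2' : 1 + ‖∏ j, z j ^ p j‖ ≤ 2 * ∏ j, (1 + (a j) ^ (p j)) := by
    rw [habs]
    have one_le : (1:ℝ) ≤ ∏ j, (1 + (a j) ^ (p j)) := by
      calc (1:ℝ) = ∏ _j : Fin 4, 1 := by simp
        _ ≤ ∏ j, (1 + (a j) ^ (p j)) :=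
          Finset.prod_le_prod (fun j _ => by norm_num)
            (fun j _ => by nlinarith [pow_nonneg (ha0 j) (p j)])
    have prod_le : (∏ j, (a j) ^ (p j)) ≤ ∏ j, (1 + (a j) ^ (p j)) :=
      Finset.prod_le_prod (fun j _ => pow_nonneg (ha0 j) _)
        (fun j _ => by nlinarith [pow_nonneg (ha0 j) (p j)])
    linarith
  -- P bound
  have hPle : (1 + w.re ^ 2) * (∏ i, (1 + (y i) ^ 2)) ≤ ∏ j, (1 + (a j) ^ 2) := by
    conv_rhs => rw [Fin.prod_univ_succ]
    have h0 : 1 + w.re ^ 2 ≤ 1 + (a 0) ^ 2 := by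
      have : |w.re| ≤ ‖w‖ := Complex.abs_re_le_norm w
      have h1 : w.re ^ 2 ≤ (‖w‖) ^ 2 := by
        rw [← _root_.sq_abs]
        exact pow_le_pow_left₀ (abs_nonneg _) this 2
      have h2 : a 0 = ‖w‖ := rfl
      rw [h2]; linarith
    have hsucc : ∀ i : Fin 3, 1 + (y i) ^ 2 = 1 + (a i.succ) ^ 2 := by
      intro i
      have : a i.succ = |y i| := by
        show ‖slice4 y w i.succ‖ = |y i|
        rw [slice4_succ, Complex.norm_real, Real.norm_eq_abs]
      rw [this, _root_.sq_abs]
    have hpr : (∏ i, (1 + (y i) ^ 2)) = ∏ i : Fin 3, (1 + (a i.succ) ^ 2) :=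
      Finset.prod_congr rfl fun i _ => hsucc i
    rw [hpr]
    exact mul_le_mul_of_nonneg_right h0 (Finset.prod_nonneg fun i _ => by positivity)
  set P : ℝ := (1 + w.re ^ 2) * ∏ i, (1 + (y i) ^ 2) with hP
  have hPpos : 0 < P := by positivity
  -- per-coordinate combine
  have h4 : (∏ j, (1 + (a j) ^ (p j))) * (∏ j, (1 + (a j) ^ 2))
      ≤ 16 * ∏ j, (1 + (a j) ^ (q j)) := by
    rw [← Finset.prod_mul_distrib]
    have h1 : ∀ j, (1 + (a j) ^ (p j)) * (1 + (a j) ^ 2) ≤ 2 * (1 + (a j) ^ (q j)) :=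
      fun j => aux_pow (a j) (ha0 j) (p j)
    calc (∏ j, (1 + (a j) ^ (p j)) * (1 + (a j) ^ 2))
        ≤ ∏ j, 2 * (1 + (a j) ^ (q j)) :=
          Finset.prod_le_prod (fun j _ => by positivity) (fun j _ => h1 j)
      _ = 16 * ∏ j, (1 + (a j) ^ (q j)) := by
          rw [Finset.prod_mul_distrib, Finset.prod_const]; norm_num
  -- final chain
  have hmain : ‖F z * f z‖ * P ≤ 2 * C * 16 * (16 * D0) := by
    have hfnn : (0:ℝ) ≤ ‖f z‖ := norm_nonneg _
    have hq1 : (0:ℝ) ≤ ∏ j, (1 + (a j) ^ (p j)) := Finset.prod_nonneg fun j _ => by positivity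
    calc ‖F z * f z‖ * P
        = ‖F z‖ * (‖f z‖ * P) := by rw [norm_mul]; ring
      _ ≤ (C * (1 + ‖∏ j, z j ^ p j‖)) * (‖f z‖ * P) := by
          apply mul_le_mul_of_nonneg_right hFz
          positivity
      _ ≤ (C * (2 * ∏ j, (1 + (a j) ^ (p j)))) * (‖f z‖ * P) := by
          apply mul_le_mul_of_nonneg_right _ (by positivity)
          exact mul_le_mul_of_nonneg_left h2' hC
      _ = 2 * C * ((∏ j, (1 + (a j) ^ (p j))) * P * ‖f z‖) := by ring
      _ ≤ 2 * C * ((∏ j, (1 + (a j) ^ (p j))) * (∏ j, (1 + (a j) ^ 2)) *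
            ‖f z‖) := by
          apply mul_le_mul_of_nonneg_left _ (by positivity)
          apply mul_le_mul_of_nonneg_right _ hfnn
          exact mul_le_mul_of_nonneg_left hPle hq1
      _ ≤ 2 * C * ((16 * ∏ j, (1 + (a j) ^ (q j))) * ‖f z‖) := by
          apply mul_le_mul_of_nonneg_left _ (by positivity)
          exact mul_le_mul_of_nonneg_right h4 hfnn
      _ = 2 * C * 16 * ((∏ j, (1 + (a j) ^ (q j))) * ‖f z‖) := by ring
      _ ≤ 2 * C * 16 * (16 * D0) := by
          apply mul_le_mul_of_nonneg_left hfdecay (by positivity)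
  -- divide
  have : ‖F z * f z‖ ≤ 2 * C * 16 * (16 * D0) / P :=
    (le_div_iff₀ hPpos).mpr hmain
  refine this.trans_eq ?_
  rw [hP, div_eq_mul_inv, mul_inv]
  rw [← Finset.prod_inv_distrib]
  ring

end Aux

theorem stmt19 (k : ℝ) (hk : 0 < k) (F f : (Fin 4 → ℂ) → ℂ)
    (hF : DifferentiableOn ℂ F (Wset k)) (hFb : PolyBoundedOn F (Wset k))
    (hf : MemTestSpace f) (ε ε' : ℝ) (hε : 0 < ε) (hε' : 0 < ε') :
    (∫ x : Fin 4 → ℝ,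
        F (fun j => if j = 0 then (x 0 : ℂ) - Complex.I * ((k + ε : ℝ) : ℂ) else (x j : ℂ)) *
        f (fun j => if j = 0 then (x 0 : ℂ) - Complex.I * ((k + ε : ℝ) : ℂ) else (x j : ℂ)))
  = (∫ x : Fin 4 → ℝ,
        F (fun j => if j = 0 then (x 0 : ℂ) - Complex.I * ((k + ε' : ℝ) : ℂ) else (x j : ℂ)) *
        f (fun j => if j = 0 then (x 0 : ℂ) - Complex.I * ((k + ε' : ℝ) : ℂ) else (x j : ℂ))) := by
  set m := min ε ε' with hmdef
  set M := max ε ε' with hMdef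
  have hm0 : 0 < m := lt_min hε hε'
  have hmM : m ≤ M := min_le_max
  have hM0 : 0 < M := lt_of_lt_of_le hm0 hmM
  have hεm : m ≤ ε := min_le_left _ _
  have hε'm : m ≤ ε' := min_le_right _ _
  have hεM : ε ≤ M := le_max_left _ _
  have hε'M : ε' ≤ M := le_max_right _ _
  obtain ⟨fc, fd, fb⟩ := hf (Kbox k M) (Kbox_compact k M) (Kbox_convex k M)
  obtain ⟨p, C, hC0, hFbdRaw⟩ := hFb (m/8) (by linarith) (k+M+1) (by linarith)
  have hFbd : ∀ (w : ℂ), w.im ∈ Set.Icc (-(k+M)) (-(k+m)) → ∀ y : Fin 3 → ℝ,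
      ‖F (slice4 y w)‖ ≤
        C * (1 + ‖∏ j, (slice4 y w j) ^ p j‖) := by
    intro w hw y
    refine hFbdRaw _ (slice4_far hm0 hw y) ?_
    intro j
    rcases j.eq_zero_or_eq_succ with rfl | ⟨i, rfl⟩
    · rw [slice4_zero, abs_le]
      constructor
      · linarith [hw.1]
      · linarith [hw.2]
    · rw [slice4_succ]
      simp only [Complex.ofReal_im, abs_zero]
      linarith
  have htube : ∀ (w : ℂ), w.im ∈ Set.Icc (-(k+M)) (-(k+m)) → ∀ y : Fin 3 → ℝ,
      slice4 y w ∈ tubeSet (Kbox k M) := by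
    intro w hw y
    exact slice4_mem_tube ⟨by linarith [hw.1], by linarith [hw.2]⟩ y
  obtain ⟨B, hB0, hBbd⟩ := master F f p C hC0 hFbd fb htube
  -- the uIcc between the two contours sits inside the strip
  have husub : ∀ t : ℝ, t ∈ Set.uIcc (-(k+ε)) (-(k+ε')) →
      t ∈ Set.Icc (-(k+M)) (-(k+m)) := by
    intro t ht
    rw [Set.mem_uIcc] at ht
    rcases ht with ⟨h1, h2⟩ | ⟨h1, h2⟩ <;> exact ⟨by linarith, by linarith⟩
  -- rewriting the statement integrand into slice form
  have keyeq : ∀ (c : ℝ) (x : Fin 4 → ℝ),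
      (fun j => if j = 0 then (x 0 : ℂ) - Complex.I * ((c : ℝ) : ℂ) else (x j : ℂ))
        = slice4 (fun i => x i.succ) ((x 0 : ℂ) - (c : ℂ) * Complex.I) := by
    intro c x
    funext j
    rcases j.eq_zero_or_eq_succ with rfl | ⟨i, rfl⟩
    · rw [slice4_zero]
      norm_num
      ring
    · rw [slice4_succ]
      simp [Fin.succ_ne_zero]
  -- integrability over ℝ⁴ of the slice-form integrand, for any c in the strip
  have hIntc : ∀ c : ℝ, c ∈ Set.Icc (k+m) (k+M) →
      Integrable (fun x : Fin 4 → ℝ =>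
        F (slice4 (fun i => x i.succ) ((x 0 : ℂ) - (c : ℂ) * Complex.I)) *
        f (slice4 (fun i => x i.succ) ((x 0 : ℂ) - (c : ℂ) * Complex.I))) := by
    intro c hc
    have himc : ∀ x0 : ℝ, ((x0 : ℂ) - (c : ℂ) * Complex.I).im ∈
        Set.Icc (-(k+M)) (-(k+m)) := by
      intro x0
      simp only [Complex.sub_im, Complex.ofReal_im, Complex.mul_im, Complex.ofReal_re,
        Complex.I_im, Complex.I_re, mul_zero, mul_one, add_zero, zero_sub]
      exact ⟨by linarith [hc.2], by linarith [hc.1]⟩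
    have hΨ : Continuous (fun x : Fin 4 → ℝ =>
        slice4 (fun i => x i.succ) ((x 0 : ℂ) - (c : ℂ) * Complex.I)) := by
      apply continuous_pi
      intro j
      rcases j.eq_zero_or_eq_succ with rfl | ⟨i, rfl⟩
      · simp only [slice4_zero]
        exact (Complex.continuous_ofReal.comp (continuous_apply 0)).sub continuous_const
      · simp only [slice4_succ]
        exact Complex.continuous_ofReal.comp (continuous_apply i.succ)
    have hcont : Continuous (fun x : Fin 4 → ℝ =>
        F (slice4 (fun i => x i.succ) ((x 0 : ℂ) - (c : ℂ) * Complex.I)) *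
        f (slice4 (fun i => x i.succ) ((x 0 : ℂ) - (c : ℂ) * Complex.I))) := by
      refine Continuous.mul ?_ ?_
      · refine hF.continuousOn.comp_continuous hΨ fun x => ?_
        refine slice4_mem_W ?_ _
        have := himc (x 0)
        have h2 := this.2
        linarith [h2]
      · refine fc.comp_continuous hΨ fun x => ?_
        refine slice4_mem_tube ⟨?_, ?_⟩ _
        · linarith [(himc (x 0)).1]
        · linarith [(himc (x 0)).2]
    refine Integrable.mono'
      ((Integrable.fin_nat_prod
        (f := fun (_ : Fin 4) => fun s : ℝ => (1 + s ^ 2)⁻¹)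
        (fun i => integrable_inv_one_add_sq)).const_mul B)
      hcont.aestronglyMeasurable (Filter.Eventually.of_forall fun x => ?_)
    have hb := hBbd ((x 0 : ℂ) - (c : ℂ) * Complex.I) (himc (x 0)) (fun i => x i.succ)
    have hre : ((x 0 : ℂ) - (c : ℂ) * Complex.I).re = x 0 := by simp
    rw [hre] at hb
    refine hb.trans_eq ?_
    conv_rhs => rw [Fin.prod_univ_succ]
    ring
  have hcons0 : ∀ (a : ℝ) (y : Fin 3 → ℝ), (Fin.cons a y : Fin 4 → ℝ) 0 = a := fun _ _ => rfl
  have hconss : ∀ (a : ℝ) (y : Fin 3 → ℝ),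
      (fun i => (Fin.cons a y : Fin 4 → ℝ) i.succ) = y := by
    intro a y; funext i; exact Fin.cons_succ _ _ _
  have hc1 : k + ε ∈ Set.Icc (k+m) (k+M) := ⟨by linarith, by linarith⟩
  have hc2 : k + ε' ∈ Set.Icc (k+m) (k+M) := ⟨by linarith, by linarith⟩
  -- rewrite both sides via keyeq and marg
  have rew : ∀ c : ℝ, c ∈ Set.Icc (k+m) (k+M) →
      (∫ x : Fin 4 → ℝ,
        F (fun j => if j = 0 then (x 0 : ℂ) - Complex.I * ((c : ℝ) : ℂ) else (x j : ℂ)) *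
        f (fun j => if j = 0 then (x 0 : ℂ) - Complex.I * ((c : ℝ) : ℂ) else (x j : ℂ)))
      = ∫ y : Fin 3 → ℝ, ∫ a : ℝ,
          F (slice4 y ((a : ℂ) - (c : ℂ) * Complex.I)) *
          f (slice4 y ((a : ℂ) - (c : ℂ) * Complex.I)) := by
    intro c hc
    have hfun : (fun x : Fin 4 → ℝ =>
        F (fun j => if j = 0 then (x 0 : ℂ) - Complex.I * ((c : ℝ) : ℂ) else (x j : ℂ)) *
        f (fun j => if j = 0 then (x 0 : ℂ) - Complex.I * ((c : ℝ) : ℂ) else (x j : ℂ)))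
        = (fun x : Fin 4 → ℝ =>
          F (slice4 (fun i => x i.succ) ((x 0 : ℂ) - (c : ℂ) * Complex.I)) *
          f (slice4 (fun i => x i.succ) ((x 0 : ℂ) - (c : ℂ) * Complex.I))) := by
      funext x
      rw [keyeq c x]
    rw [hfun, marg _ (hIntc c hc)]
    simp only [Fin.cons_succ, Fin.cons_zero]
  rw [rew (k+ε) hc1, rew (k+ε') hc2]
  congr 1
  funext y
  -- contour shift on each slice
  refine contour_shift (fun w => F (slice4 y w) * f (slice4 y w)) (k+ε) (k+ε')
    {w : ℂ | -(k+M+1) < w.im ∧ w.im < -k} ?_ ?_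
    (B * ∏ i, (1 + (y i) ^ 2)⁻¹) ?_
  · intro w hw
    have := husub w.im hw
    exact ⟨by linarith [this.1], by linarith [this.2]⟩
  · intro w hw
    have hslice : DifferentiableAt ℂ (fun w : ℂ => slice4 y w) w := by
      rw [differentiableAt_pi]
      intro j
      rcases j.eq_zero_or_eq_succ with rfl | ⟨i, rfl⟩
      · simp only [slice4_zero]
        exact differentiableAt_id
      · simp only [slice4_succ]
        exact differentiableAt_const _
    have hFat : DifferentiableAt ℂ F (slice4 y w) :=
      hF.differentiableAt ((Wopen k).mem_nhds (slice4_mem_W hw.2 y))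
    have hfat : DifferentiableAt ℂ f (slice4 y w) := by
      refine fd.differentiableAt ?_
      refine Filter.mem_of_superset ?_ (opentube_sub k M)
      exact (opentube_open k M).mem_nhds (slice4_mem_opentube ⟨hw.1, hw.2⟩ y)
    exact ((hFat.comp w hslice).mul (hfat.comp w hslice)).differentiableWithinAt
  · intro w hw
    have hw' := husub w.im hw
    have hb := hBbd w hw' y
    refine hb.trans_eq ?_
    ring
end
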